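/- Let G = (V,E) be a finite graph with at least one edge, and let Δ be the maximum degree of the Cartesian product K_2 □ G. Then Alice has a winning strategy in the (1,1)-colouring game on K_2 □ G with Bob moving first, using Δ colours. In particular χ_{g_B}(K_2 □ G) ≤ Δ(K_2 □ G) = Δ(G) + 1. -/

import Mathlib

variable {V : Type*} [Fintype V] [DecidableEq V]

/-- A partial colouring with palette `Fin k` is proper if adjacent vertices never
receive the same colour. -/
def ProperPartial {k : ℕ} (G : SimpleGraph V) (c : V → Option (Fin k)) : Prop :=
  ∀ v w, G.Adj v w → ∀ x, c v = some x → c w ≠ some x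

/-- The number of uncoloured vertices. -/
def uncoloured {k : ℕ} (c : V → Option (Fin k)) : ℕ :=
  (Finset.univ.filter fun v => c v = none).card

/-- A single move: properly colour one previously uncoloured vertex. -/
def GMove {k : ℕ} (G : SimpleGraph V) (c c' : V → Option (Fin k)) : Prop :=
  ∃ v x, c v = none ∧ c' = Function.update c v (some x) ∧ ProperPartial G c'

/-- A sequence of exactly `t` single moves. -/
def GMoveSeq {k : ℕ} (G : SimpleGraph V) :
    ℕ → (V → Option (Fin k)) → (V → Option (Fin k)) → Prop
  | 0, c, c' => c' = c
  | t + 1, c, c' => ∃ c'', GMove G c c'' ∧ GMoveSeq G t c'' c'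

/-- A turn of a player who must colour `min t u` vertices, where `u` is the current
number of uncoloured vertices. -/
def GTurn {k : ℕ} (G : SimpleGraph V) (t : ℕ) (c c' : V → Option (Fin k)) : Prop :=
  GMoveSeq G (min t (uncoloured c)) c c'

/-- `AliceWins G k a b turn c`: Alice has a winning strategy in the `(a,b)`-colouring
game on `G` with `k` colours from position `c`, where `turn = true` means it is
Alice's turn and `turn = false` means it is Bob's turn. Alice wins exactly when the
whole graph eventually gets coloured. -/
inductive AliceWins (G : SimpleGraph V) (k a b : ℕ) :
    Bool → (V → Option (Fin k)) → Prop
  | done (turn : Bool) (c : V → Option (Fin k)) :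
      uncoloured c = 0 → AliceWins G k a b turn c
  | aliceTurn (c c' : V → Option (Fin k)) : 0 < uncoloured c → GTurn G a c c' →
      AliceWins G k a b false c' → AliceWins G k a b true c
  | bobTurn (c : V → Option (Fin k)) : 0 < uncoloured c →
      (∃ c', GTurn G b c c') →
      (∀ c', GTurn G b c c' → AliceWins G k a b true c') →
      AliceWins G k a b false c

/-- The everywhere-uncoloured position. -/
def emptyCol (V : Type*) (k : ℕ) : V → Option (Fin k) := fun _ => none

lemma fin2_ne : ∀ i j : Fin 2, i ≠ j → j = i + 1 := by decide
lemma fin2_add : ∀ i : Fin 2, i + 1 + 1 = i := by decide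
lemma fin2_succ_ne : ∀ i : Fin 2, i + 1 ≠ i := by decide
lemma fin2_cases : ∀ i : Fin 2, i = 0 ∨ i = 1 := by decide
lemma f01 : (0 : Fin 2) + 1 = 1 := rfl
lemma f10 : (1 : Fin 2) + 1 = 0 := rfl

/-- Alice's shift of colours: on side `0` add one, on side `1` subtract one. -/
def shift11 {m : ℕ} (i : Fin 2) (x : Fin (m+2)) : Fin (m+2) :=
  if i = 0 then x + 1 else x - 1

lemma shift11_ne {m : ℕ} (i : Fin 2) (x : Fin (m+2)) : shift11 i x ≠ x := by
  unfold shift11; split <;> simp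

lemma shift11_inj {m : ℕ} (i : Fin 2) {x y : Fin (m+2)}
    (h : shift11 i x = shift11 i y) : x = y := by
  unfold shift11 at h
  split at h
  · exact add_right_cancel h
  · rw [← sub_add_cancel x 1, h, sub_add_cancel]

lemma degree_irrel {W : Type*} (H : SimpleGraph W) (p : W)
    (i1 i2 : Fintype (H.neighborSet p)) :
    @SimpleGraph.degree W H p i1 = @SimpleGraph.degree W H p i2 := by
  cases Subsingleton.elim i1 i2; rfl

section Aux
variable {W : Type*} [Fintype W] [DecidableEq W]

lemma proper_update11 {k : ℕ} (H : SimpleGraph W) (c : W → Option (Fin k)) (p : W) (x : Fin k)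
    (hc : ProperPartial H c)
    (hx : ∀ w, H.Adj p w → c w ≠ some x) :
    ProperPartial H (Function.update c p (some x)) := by
  intro u w hadj z hu
  by_cases hup : u = p
  · rw [hup] at hu hadj
    rw [Function.update_self] at hu
    obtain rfl : x = z := by injection hu
    have hwp : w ≠ p := fun h => H.irrefl (h ▸ hadj)
    rw [Function.update_of_ne hwp]
    exact hx w hadj
  · rw [Function.update_of_ne hup] at hu
    by_cases hwp : w = p
    · subst hwp
      rw [Function.update_self]
      intro hzx
      obtain rfl : x = z := by injection hzx
      exact hx u (H.adj_symm hadj) hu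
    · rw [Function.update_of_ne hwp]
      exact hc u w hadj z hu

lemma uncoloured_update_lt {k : ℕ} (c : W → Option (Fin k)) (p : W) (x : Fin k)
    (h : c p = none) :
    uncoloured (Function.update c p (some x)) < uncoloured c := by
  have hsub : (Finset.univ.filter fun v => Function.update c p (some x) v = none) ⊆
      (Finset.univ.filter fun v => c v = none) := by
    intro w hw
    simp only [Finset.mem_filter, Finset.mem_univ, true_and] at hw ⊢
    by_cases hwp : w = p
    · subst hwp; simp at hw
    · rwa [Function.update_of_ne hwp] at hw
  refine Finset.card_lt_card ((Finset.ssubset_iff_of_subset hsub).2 ⟨p, ?_, ?_⟩)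
  · simp [h]
  · simp

end Aux

section Key
variable {V : Type*} [Fintype V] [DecidableEq V]

lemma key_lemma11 (G : SimpleGraph V) [DecidableRel G.Adj]
    (H : SimpleGraph (Fin 2 × V))
    (hadj : ∀ (a b : Fin 2) (v w : V),
      H.Adj (a, v) (b, w) ↔ (a ≠ b ∧ v = w) ∨ (G.Adj v w ∧ a = b))
    (m : ℕ) (hk : ∀ v, G.degree v < m + 2) :
    ∀ (c : Fin 2 × V → Option (Fin (m+2))),
      (ProperPartial H c ∧ ∀ v : V, (c (0,v) = none ∧ c (1,v) = none) ∨
        ∃ x, c (0,v) = some x ∧ c (1,v) = some (x+1)) →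
      AliceWins H (m+2) 1 1 false c := by
  classical
  have main : ∀ (n : ℕ) (c : Fin 2 × V → Option (Fin (m+2))), uncoloured c < n →
      (ProperPartial H c ∧ ∀ v : V, (c (0,v) = none ∧ c (1,v) = none) ∨
        ∃ x, c (0,v) = some x ∧ c (1,v) = some (x+1)) →
      AliceWins H (m+2) 1 1 false c := by
    intro n
    induction n with
    | zero => intro c hlt; omega
    | succ n ih =>
      intro c hlt hc
      by_cases h0 : uncoloured c = 0
      · exact AliceWins.done false c h0
      have hpos : 0 < uncoloured c := Nat.pos_of_ne_zero h0
      obtain ⟨hprop, hpair⟩ := hc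
      have pairnone : ∀ (i : Fin 2) (v : V), c (i, v) = none → c (i+1, v) = none := by
        intro i v h
        rcases hpair v with ⟨h0', h1'⟩ | ⟨x, h0', h1'⟩
        · rcases fin2_cases i with rfl | rfl
          · rw [f01]; exact h1'
          · rw [f10]; exact h0'
        · rcases fin2_cases i with rfl | rfl <;> simp_all
      have pairrel : ∀ (i : Fin 2) (v : V) (z : Fin (m+2)),
          c (i, v) = some z → c (i+1, v) = some (shift11 i z) := by
        intro i v z h
        rcases hpair v with ⟨h0', h1'⟩ | ⟨x, h0', h1'⟩
        · rcases fin2_cases i with rfl | rfl <;> simp_all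
        · rcases fin2_cases i with rfl | rfl
          · rw [h0'] at h
            obtain rfl : x = z := by injection h
            rw [f01, h1']
            simp [shift11]
          · rw [h1'] at h
            obtain rfl : z = x + 1 := (Option.some.inj h).symm
            rw [f10, h0']
            simp only [shift11, if_neg (by decide : ¬(1:Fin 2) = 0), add_sub_cancel_right]
      -- Bob has a legal move
      obtain ⟨p, hp⟩ : ∃ p, c p = none := by
        obtain ⟨p, hp⟩ := Finset.card_pos.mp hpos
        exact ⟨p, (Finset.mem_filter.mp hp).2⟩
      obtain ⟨i, v⟩ := p
      have hxex : ∃ x : Fin (m+2),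
          x ∉ (G.neighborFinset v).biUnion (fun u => (c (i, u)).toFinset) := by
        by_contra hcon
        push_neg at hcon
        have h1 : (Finset.univ : Finset (Fin (m+2))).card ≤
            ((G.neighborFinset v).biUnion (fun u => (c (i, u)).toFinset)).card :=
          Finset.card_le_card (fun x _ => hcon x)
        have h2 : ((G.neighborFinset v).biUnion (fun u => (c (i, u)).toFinset)).card ≤
            G.degree v := by
          calc ((G.neighborFinset v).biUnion (fun u => (c (i, u)).toFinset)).card
              ≤ ∑ u ∈ G.neighborFinset v, ((c (i,u)).toFinset).card :=
                Finset.card_biUnion_le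
            _ ≤ ∑ _u ∈ G.neighborFinset v, 1 :=
                Finset.sum_le_sum (fun u _ => by cases c (i,u) <;> simp)
            _ = G.degree v := by rw [Finset.sum_const, smul_eq_mul, mul_one]; rfl
        have h3 := hk v
        simp only [Finset.card_univ, Fintype.card_fin] at h1
        omega
      obtain ⟨x, hx⟩ := hxex
      have hxgood : ∀ w, H.Adj (i, v) w → c w ≠ some x := by
        rintro ⟨j, u⟩ haw hcw
        rw [hadj] at haw
        rcases haw with ⟨hne, rfl⟩ | ⟨hg, rfl⟩
        · obtain rfl := fin2_ne i j hne
          rw [pairnone i v hp] at hcw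
          exact absurd hcw (by simp)
        · exact hx (Finset.mem_biUnion.mpr
            ⟨u, (SimpleGraph.mem_neighborFinset _ _ _).mpr hg,
              Option.mem_toFinset.mpr (Option.mem_def.mpr hcw)⟩)
      have hexists : ∃ c', GTurn H 1 c c' := by
        refine ⟨Function.update c (i,v) (some x), ?_⟩
        unfold GTurn
        rw [min_eq_left hpos]
        exact ⟨_, ⟨(i,v), x, hp, rfl, proper_update11 H c (i,v) x hprop hxgood⟩, rfl⟩
      refine AliceWins.bobTurn c hpos hexists ?_
      intro c' hturn
      unfold GTurn at hturn
      rw [min_eq_left hpos] at hturn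
      have hturn' : ∃ c'', GMove H c c'' ∧ c' = c'' := hturn
      obtain ⟨c'', ⟨q, y, hqnone, rfl, hprop'⟩, rfl⟩ := hturn'
      obtain ⟨j, u⟩ := q
      -- Alice answers on the partner vertex
      have hqnone2 : c (j+1, u) = none := pairnone j u hqnone
      set c1 := Function.update c (j, u) (some y) with hc1
      have hc1other : ∀ r : Fin 2 × V, r ≠ (j,u) → c1 r = c r :=
        fun r hr => Function.update_of_ne hr _ _
      have hne1 : ((j+1 : Fin 2), u) ≠ (j, u) := by
        simp [Prod.ext_iff, fin2_succ_ne j]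
      have h1none : c1 (j+1, u) = none := by rw [hc1other _ hne1]; exact hqnone2
      have hpos1 : 0 < uncoloured c1 := Finset.card_pos.mpr
        ⟨(j+1,u), Finset.mem_filter.mpr ⟨Finset.mem_univ _, h1none⟩⟩
      set z := shift11 j y with hz
      have hzgood : ∀ w, H.Adj (j+1, u) w → c1 w ≠ some z := by
        rintro ⟨l, w⟩ haw hcw
        rw [hadj] at haw
        rcases haw with ⟨hne, rfl⟩ | ⟨hg, rfl⟩
        · obtain rfl := fin2_ne _ _ hne
          rw [fin2_add j, hc1, Function.update_self] at hcw
          exact shift11_ne j y ((Option.some.inj hcw).symm)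
        · have hwu : w ≠ u := fun h => G.irrefl (h ▸ hg)
          have hne2 : ((j+1 : Fin 2), w) ≠ (j, u) := by
            simp [Prod.ext_iff, fin2_succ_ne j]
          rw [hc1other _ hne2] at hcw
          -- hcw : c (j+1, w) = some z
          have hrel := pairrel (j+1) w z hcw
          rw [fin2_add j] at hrel
          -- hrel : c (j, w) = some (shift11 (j+1) z)
          have hne3 : ((j : Fin 2), w) ≠ (j, u) := by simp [Prod.ext_iff, hwu]
          have hc1w : c1 (j, w) = some (shift11 (j+1) z) := by
            rw [hc1other _ hne3]; exact hrel
          have := hprop' (j, u) (j, w)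
            ((hadj j j u w).mpr (Or.inr ⟨hg, rfl⟩)) y (by rw [hc1, Function.update_self])
          apply this
          rw [hc1w]
          congr 1
          -- y = shift11 (j+1) z where z = shift11 j y
          rcases fin2_cases j with rfl | rfl
          · rw [hz]; simp [shift11, f01]
          · rw [hz]; simp [shift11, f10, sub_add_cancel]
      set c2 := Function.update c1 (j+1, u) (some z) with hc2
      have hprop2 : ProperPartial H c2 := proper_update11 H c1 (j+1,u) z hprop' hzgood
      have hmove2 : GMove H c1 c2 := ⟨(j+1,u), z, h1none, rfl, hprop2⟩
      have hturn2 : GTurn H 1 c1 c2 := by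
        unfold GTurn
        rw [min_eq_left hpos1]
        exact ⟨c2, hmove2, rfl⟩
      have hdec : uncoloured c2 < n := by
        have d1 := uncoloured_update_lt c (j,u) y hqnone
        have d2 := uncoloured_update_lt c1 (j+1,u) z h1none
        rw [← hc1] at d1
        rw [← hc2] at d2
        omega
      have hpair2 : ∀ w : V, (c2 (0,w) = none ∧ c2 (1,w) = none) ∨
          ∃ t, c2 (0,w) = some t ∧ c2 (1,w) = some (t+1) := by
        intro w
        by_cases hwu : w = u
        · subst hwu
          right
          rcases fin2_cases j with rfl | rfl
          · refine ⟨y, ?_, ?_⟩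
            · rw [hc2, Function.update_of_ne (by rw [f01]; simp [Prod.ext_iff] : ((0:Fin 2), w) ≠ ((0:Fin 2)+1, w)), hc1, Function.update_self]
            · rw [hc2, f01, Function.update_self, hz]
              simp [shift11]
          · refine ⟨y - 1, ?_, ?_⟩
            · rw [hc2, f10, Function.update_self, hz]
              simp [shift11]
            · rw [hc2, Function.update_of_ne (by rw [f10]; simp [Prod.ext_iff] : ((1:Fin 2), w) ≠ ((1:Fin 2)+1, w)), hc1, Function.update_self, sub_add_cancel]
        · have e0 : c2 (0, w) = c (0, w) := by
            rw [hc2, Function.update_of_ne (by simp [Prod.ext_iff, hwu]), hc1other _ (by simp [Prod.ext_iff, hwu])]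
          have e1 : c2 (1, w) = c (1, w) := by
            rw [hc2, Function.update_of_ne (by simp [Prod.ext_iff, hwu]), hc1other _ (by simp [Prod.ext_iff, hwu])]
          rw [e0, e1]
          exact hpair w
      exact AliceWins.aliceTurn c1 c2 hpos1 hturn2 (ih c2 hdec ⟨hprop2, hpair2⟩)
  intro c hc
  exact main (uncoloured c + 1) c (Nat.lt_succ_self _) hc

end Key

open scoped Classical in
/-- let `G` be a finite graph with at least one edge and let
`Δ = Δ(K₂ □ G)` be the maximum degree of the Cartesian product `K₂ □ G`. Then Alice
has a winning strategy in the colouring game on `K₂ □ G` with Bob moving first using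
`Δ` colours; in particular `χ_{g_B}(K₂ □ G) ≤ Δ(K₂ □ G) = Δ(G) + 1`. -/
theorem stmt11 {V : Type*} [Fintype V] [DecidableEq V] (G : SimpleGraph V)
    [DecidableRel G.Adj] (hE : ∃ v w, G.Adj v w) :
    AliceWins ((⊤ : SimpleGraph (Fin 2)).boxProd G)
        (((⊤ : SimpleGraph (Fin 2)).boxProd G).maxDegree) 1 1 false
        (emptyCol (Fin 2 × V) (((⊤ : SimpleGraph (Fin 2)).boxProd G).maxDegree)) ∧
      ((⊤ : SimpleGraph (Fin 2)).boxProd G).maxDegree = G.maxDegree + 1 := by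
  classical
  obtain ⟨v0, w0, hvw⟩ := hE
  haveI : Nonempty V := ⟨v0⟩
  have hdegH : ∀ (p : Fin 2 × V) (inst : Fintype (((⊤ : SimpleGraph (Fin 2)).boxProd G).neighborSet p)),
      @SimpleGraph.degree _ ((⊤ : SimpleGraph (Fin 2)).boxProd G) p inst = G.degree p.2 + 1 := by
    intro p inst
    rw [degree_irrel _ p inst (SimpleGraph.boxProdFintypeNeighborSet p),
      SimpleGraph.degree_boxProd]
    have h1 : (⊤ : SimpleGraph (Fin 2)).degree p.1 = 1 := by simp
    omega
  have hGd : 1 ≤ G.maxDegree := by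
    have h0 : 0 < G.degree v0 := by rw [G.degree_pos_iff_exists_adj]; exact ⟨w0, hvw⟩
    have := G.degree_le_maxDegree v0
    omega
  have hmax : ((⊤ : SimpleGraph (Fin 2)).boxProd G).maxDegree = G.maxDegree + 1 := by
    apply le_antisymm
    · apply SimpleGraph.maxDegree_le_of_forall_degree_le
      intro p
      rw [hdegH p _]
      have := G.degree_le_maxDegree p.2
      omega
    · obtain ⟨v, hv⟩ := G.exists_maximal_degree_vertex
      have h2 := ((⊤ : SimpleGraph (Fin 2)).boxProd G).degree_le_maxDegree ((0 : Fin 2), v)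
      rw [hdegH ((0 : Fin 2), v) _] at h2
      simp only at h2
      omega
  refine ⟨?_, hmax⟩
  obtain ⟨m, hm⟩ : ∃ m, ((⊤ : SimpleGraph (Fin 2)).boxProd G).maxDegree = m + 2 :=
    ⟨G.maxDegree - 1, by omega⟩
  rw [hm]
  refine key_lemma11 G _ ?_ m ?_ _ ?_
  · intro a b v w
    rw [SimpleGraph.boxProd_adj]
    simp only [SimpleGraph.top_adj]
  · intro v
    have h2 := ((⊤ : SimpleGraph (Fin 2)).boxProd G).degree_le_maxDegree ((0 : Fin 2), v)
    rw [hdegH ((0 : Fin 2), v) _, hm] at h2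
    simp only at h2
    omega
  · refine ⟨fun v w _ x hx => by simp [emptyCol] at hx, fun v => Or.inl ⟨rfl, rfl⟩⟩
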